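/- Let α ∈ (0,1) and let x, y ≥ 0 be real. Then: (i) ∫_0^x ∫_0^y (α^(max(s,t)+s+t) − (1/3)·α^(3·max(s,t))) dt ds = (α^(min(x,y)) − 1)·(α^(2x) + α^(2y))/(2(ln α)²) − min(x,y)·(α^(3x) + α^(3y))/(9 ln α) + (7 − 7·α^(3·min(x,y)))/(27(ln α)²); (ii) ∫_0^x ∫_{ℝ≥0} (α^(max(s,t)+s+t) − (1/3)·α^(3·max(s,t))) dt ds = (14 − 27·α^(2x) + 13·α^(3x))/(54(ln α)²) − x·α^(3x)/(9 ln α). -/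

import Mathlib

open MeasureTheory Set Real

private lemma hd_lin (l c d u : ℝ) :
    HasDerivAt (fun t => Real.exp (l*(c*t+d))) (l*c*Real.exp (l*(c*u+d))) u := by
  have h1 : HasDerivAt (fun t : ℝ => l*(c*t+d)) (l*c) u := by
    simpa using (((hasDerivAt_id u).const_mul c).add_const d).const_mul l
  convert h1.exp using 1
  ring

private lemma cont_lin (l c d : ℝ) : Continuous fun t : ℝ => Real.exp (l*(c*t+d)) :=
  Real.continuous_exp.comp (by continuity)

private lemma ii_lin (l c d a b : ℝ) :
    IntervalIntegrable (fun t => Real.exp (l*(c*t+d))) volume a b :=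
  (cont_lin l c d).intervalIntegrable a b

private lemma int_exp (l c d a b : ℝ) (h : l*c ≠ 0) :
    ∫ t in a..b, Real.exp (l*(c*t+d)) =
      (Real.exp (l*(c*b+d)) - Real.exp (l*(c*a+d)))/(l*c) := by
  have key : ∀ u : ℝ, HasDerivAt (fun t => Real.exp (l*(c*t+d))/(l*c))
      (Real.exp (l*(c*u+d))) u := by
    intro u
    have h2 := (hd_lin l c d u).div_const (l*c)
    rwa [mul_div_cancel_left₀ _ h] at h2
  rw [intervalIntegral.integral_eq_sub_of_hasDerivAt (fun u _ => key u) (ii_lin l c d a b)]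
  ring

private lemma int_mul_exp (l a b : ℝ) (h : l ≠ 0) :
    ∫ s in a..b, s * Real.exp (l*(3*s+0)) =
      (b * Real.exp (l*(3*b+0)) - a * Real.exp (l*(3*a+0)))/(3*l)
        - (Real.exp (l*(3*b+0)) - Real.exp (l*(3*a+0)))/(9*l^2) := by
  have key : ∀ u : ℝ, HasDerivAt
      (fun s => s * Real.exp (l*(3*s+0))/(3*l) - Real.exp (l*(3*s+0))/(9*l^2))
      (u * Real.exp (l*(3*u+0))) u := by
    intro u
    have h1 : HasDerivAt (fun s : ℝ => s * Real.exp (l*(3*s+0)))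
        (1 * Real.exp (l*(3*u+0)) + u * (l*3*Real.exp (l*(3*u+0)))) u :=
      (hasDerivAt_id u).mul (hd_lin l 3 0 u)
    have h2 := (h1.div_const (3*l)).sub ((hd_lin l 3 0 u).div_const (9*l^2))
    refine h2.congr_deriv ?_
    field_simp
    ring
  rw [intervalIntegral.integral_eq_sub_of_hasDerivAt (fun u _ => key u)
    (((continuous_id.mul (cont_lin l 3 0))).intervalIntegrable a b)]
  ring

private lemma int_exp_Ioi (l c d a : ℝ) (hl : l < 0) (hc : 0 < c) :
    ∫ t in Set.Ioi a, Real.exp (l*(c*t+d)) = -(Real.exp (l*(c*a+d))/(l*c)) := by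
  have hlc : l*c ≠ 0 := (mul_neg_of_neg_of_pos hl hc).ne
  have key : ∀ u ∈ Set.Ioi a, HasDerivAt (fun t => Real.exp (l*(c*t+d))/(l*c))
      (Real.exp (l*(c*u+d))) u := by
    intro u _
    have h2 := (hd_lin l c d u).div_const (l*c)
    rwa [mul_div_cancel_left₀ _ hlc] at h2
  have hint : IntegrableOn (fun t => Real.exp (l*(c*t+d))) (Set.Ioi a) := by
    have h2 : IntegrableOn (fun t => Real.exp (l*d) * Real.exp (-(-(l*c)) * t)) (Set.Ioi a) :=
      (exp_neg_integrableOn_Ioi a (by nlinarith)).const_mul _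
    refine h2.congr_fun (fun t _ => ?_) measurableSet_Ioi
    beta_reduce
    rw [← Real.exp_add]
    ring_nf
  have h3 : Filter.Tendsto (fun t : ℝ => l*(c*t+d)) Filter.atTop Filter.atBot := by
    have : (fun t : ℝ => l*(c*t+d)) = fun t => (l*c)*t + l*d := by funext t; ring
    rw [this]
    exact Filter.tendsto_atBot_add_const_right _ _
      (Filter.Tendsto.const_mul_atTop_of_neg (mul_neg_of_neg_of_pos hl hc) Filter.tendsto_id)
  have hlim : Filter.Tendsto (fun t => Real.exp (l*(c*t+d))/(l*c)) Filter.atTop (nhds 0) := by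
    have := (Real.tendsto_exp_atBot.comp h3).div_const (l*c)
    simpa using this
  have := MeasureTheory.integral_Ioi_of_hasDerivAt_of_tendsto
    ((cont_lin l c d).continuousWithinAt.div_const _) key hint hlim
  rw [this]
  ring

private lemma cont_ker (l s : ℝ) :
    Continuous (fun t => Real.exp (l*(max s t + s + t)) - (1/3) * Real.exp (l*(3 * max s t))) := by
  have hmax : Continuous fun t : ℝ => max s t := continuous_const.max continuous_id
  exact (Real.continuous_exp.comp (continuous_const.mul ((hmax.add continuous_const).add
    continuous_id))).sub (continuous_const.mul (Real.continuous_exp.comp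
    (continuous_const.mul (continuous_const.mul hmax))))

private lemma inner_fin (l s y : ℝ) (hl : l ≠ 0) (hs : 0 ≤ s) (hy : 0 ≤ y) :
    ∫ t in (0:ℝ)..y, (Real.exp (l*(max s t + s + t)) - (1/3) * Real.exp (l*(3 * max s t))) =
      (Real.exp (l*(2*s + min s y)) - Real.exp (l*(2*s)))/l - (1/3)*Real.exp (l*(3*s))*(min s y)
      + (Real.exp (l*(s+2*y)) - Real.exp (l*(s+2*min s y)))/(2*l)
      - (Real.exp (l*(3*y)) - Real.exp (l*(3*min s y)))/(9*l) := by
  rcases le_total s y with h | h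
  · rw [min_eq_left h]
    rw [← intervalIntegral.integral_add_adjacent_intervals (a := (0:ℝ)) (b := s) (c := y)
      ((cont_ker l s).intervalIntegrable 0 s) ((cont_ker l s).intervalIntegrable s y)]
    have e1 : ∫ t in (0:ℝ)..s, (Real.exp (l*(max s t + s + t)) - (1/3) * Real.exp (l*(3 * max s t)))
        = ∫ t in (0:ℝ)..s, (Real.exp (l*(1*t+2*s)) - (1/3) * Real.exp (l*(3*s))) := by
      apply intervalIntegral.integral_congr
      intro t ht
      rw [Set.uIcc_of_le hs] at ht
      have hm : max s t = s := max_eq_left ht.2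
      simp only [hm]
      ring_nf
    have e2 : ∫ t in s..y, (Real.exp (l*(max s t + s + t)) - (1/3) * Real.exp (l*(3 * max s t)))
        = ∫ t in s..y, (Real.exp (l*(2*t+s)) - (1/3) * Real.exp (l*(3*t+0))) := by
      apply intervalIntegral.integral_congr
      intro t ht
      rw [Set.uIcc_of_le h] at ht
      have hm : max s t = t := max_eq_right ht.1
      simp only [hm]
      ring_nf
    rw [e1, e2,
      intervalIntegral.integral_sub (ii_lin l 1 (2*s) 0 s) intervalIntegrable_const,
      intervalIntegral.integral_sub (ii_lin l 2 s s y) ((ii_lin l 3 0 s y).const_mul _)]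
    simp only [intervalIntegral.integral_const_mul, intervalIntegral.integral_const,
      smul_eq_mul]
    rw [int_exp l 1 (2*s) 0 s (by simpa using hl),
      int_exp l 2 s s y (mul_ne_zero hl two_ne_zero),
      int_exp l 3 0 s y (mul_ne_zero hl three_ne_zero)]
    rw [show l*(1*s+2*s) = l*(3*s) by ring, show l*(1*0+2*s) = l*(2*s) by ring,
      show l*(2*y+s) = l*(s+2*y) by ring, show l*(2*s+s) = l*(3*s) by ring,
      show l*(3*y+0) = l*(3*y) by ring, show l*(3*s+0) = l*(3*s) by ring,
      show l*(s+2*s) = l*(3*s) by ring]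
    field_simp
    ring
  · rw [min_eq_right h]
    have e1 : ∫ t in (0:ℝ)..y, (Real.exp (l*(max s t + s + t)) - (1/3) * Real.exp (l*(3 * max s t)))
        = ∫ t in (0:ℝ)..y, (Real.exp (l*(1*t+2*s)) - (1/3) * Real.exp (l*(3*s))) := by
      apply intervalIntegral.integral_congr
      intro t ht
      rw [Set.uIcc_of_le hy] at ht
      have hm : max s t = s := max_eq_left (le_trans ht.2 h)
      simp only [hm]
      ring_nf
    rw [e1,
      intervalIntegral.integral_sub (ii_lin l 1 (2*s) 0 y) intervalIntegrable_const]
    simp only [intervalIntegral.integral_const, smul_eq_mul]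
    rw [int_exp l 1 (2*s) 0 y (by simpa using hl)]
    rw [show l*(1*y+2*s) = l*(2*s+y) by ring, show l*(1*0+2*s) = l*(2*s) by ring]
    simp only [mul_one, sub_self, zero_div, sub_zero, add_zero]
    ring

private lemma intOn_exp_Ioi (l c d a : ℝ) (hl : l < 0) (hc : 0 < c) :
    IntegrableOn (fun t => Real.exp (l*(c*t+d))) (Set.Ioi a) := by
  have h2 : IntegrableOn (fun t => Real.exp (l*d) * Real.exp (-(-(l*c)) * t)) (Set.Ioi a) :=
    (exp_neg_integrableOn_Ioi a (by nlinarith)).const_mul _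
  refine h2.congr_fun (fun t _ => ?_) measurableSet_Ioi
  beta_reduce
  rw [← Real.exp_add]
  ring_nf

private lemma inner_inf (l s : ℝ) (hl : l < 0) (hs : 0 ≤ s) :
    ∫ t in Set.Ici (0:ℝ), (Real.exp (l*(max s t + s + t)) - (1/3) * Real.exp (l*(3 * max s t))) =
      (11/(18*l)) * Real.exp (l*(3*s)) - Real.exp (l*(2*s))/l - (1/3)*s*Real.exp (l*(3*s)) := by
  have hdisj : Disjoint (Set.Icc (0:ℝ) s) (Set.Ioi s) :=
    (Set.Iic_disjoint_Ioi le_rfl).mono_left Set.Icc_subset_Iic_self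
  have hint1 : IntegrableOn
      (fun t => Real.exp (l*(max s t + s + t)) - (1/3) * Real.exp (l*(3 * max s t)))
      (Set.Icc (0:ℝ) s) := (cont_ker l s).integrableOn_Icc
  have hint2 : IntegrableOn
      (fun t => Real.exp (l*(max s t + s + t)) - (1/3) * Real.exp (l*(3 * max s t)))
      (Set.Ioi s) := by
    have h2 : IntegrableOn (fun t => Real.exp (l*(2*t+s)) - (1/3) * Real.exp (l*(3*t+0)))
        (Set.Ioi s) := (intOn_exp_Ioi l 2 s s hl two_pos).sub
      ((intOn_exp_Ioi l 3 0 s hl three_pos).const_mul _)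
    refine h2.congr_fun (fun t ht => ?_) measurableSet_Ioi
    have hm : max s t = t := max_eq_right (le_of_lt ht)
    simp only [hm]
    ring_nf
  rw [← Set.Icc_union_Ioi_eq_Ici hs,
    MeasureTheory.setIntegral_union hdisj measurableSet_Ioi hint1 hint2]
  have e1 : ∫ t in Set.Icc (0:ℝ) s,
      (Real.exp (l*(max s t + s + t)) - (1/3) * Real.exp (l*(3 * max s t)))
      = ∫ t in (0:ℝ)..s,
      (Real.exp (l*(max s t + s + t)) - (1/3) * Real.exp (l*(3 * max s t))) := by
    rw [intervalIntegral.integral_of_le hs, MeasureTheory.integral_Icc_eq_integral_Ioc]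
  have e2 : ∫ t in Set.Ioi s,
      (Real.exp (l*(max s t + s + t)) - (1/3) * Real.exp (l*(3 * max s t)))
      = ∫ t in Set.Ioi s, (Real.exp (l*(2*t+s)) - (1/3) * Real.exp (l*(3*t+0))) := by
    refine MeasureTheory.setIntegral_congr_fun measurableSet_Ioi (fun t ht => ?_)
    have hm : max s t = t := max_eq_right (le_of_lt ht)
    simp only [hm]
    ring_nf
  rw [e1, e2, inner_fin l s s hl.ne hs hs,
    MeasureTheory.integral_sub (intOn_exp_Ioi l 2 s s hl two_pos)
      ((intOn_exp_Ioi l 3 0 s hl three_pos).const_mul _),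
    MeasureTheory.integral_const_mul,
    int_exp_Ioi l 2 s s hl two_pos, int_exp_Ioi l 3 0 s hl three_pos]
  rw [min_self]
  rw [show l*(2*s+s) = l*(3*s) by ring, show l*(s+2*s) = l*(3*s) by ring,
    show l*(3*s+0) = l*(3*s) by ring]
  have hl' : l ≠ 0 := hl.ne
  field_simp
  ring

private noncomputable def F1 (l y s : ℝ) : ℝ :=
  (Real.exp (l*(3*s+0))/(3*l) - Real.exp (l*(2*s+0))/(2*l))/l
  - (1/3)*(s * Real.exp (l*(3*s+0))/(3*l) - Real.exp (l*(3*s+0))/(9*l^2))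
  + (Real.exp (l*(1*s+2*y))/l - Real.exp (l*(3*s+0))/(3*l))/(2*l)
  - (Real.exp (l*(3*y)) * s - Real.exp (l*(3*s+0))/(3*l))/(9*l)

private lemma int_G1 (l y a b : ℝ) (hl : l ≠ 0) :
    ∫ s in a..b, ((Real.exp (l*(3*s+0)) - Real.exp (l*(2*s+0)))/l
      - (1/3)*(s * Real.exp (l*(3*s+0)))
      + (Real.exp (l*(1*s+2*y)) - Real.exp (l*(3*s+0)))/(2*l)
      - (Real.exp (l*(3*y)) - Real.exp (l*(3*s+0)))/(9*l))
    = F1 l y b - F1 l y a := by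
  apply intervalIntegral.integral_eq_sub_of_hasDerivAt (f := F1 l y)
  · intro s _
    unfold F1
    have h30 := hd_lin l 3 0 s
    have h20 := hd_lin l 2 0 s
    have h12 := hd_lin l 1 (2*y) s
    have hmul : HasDerivAt (fun s : ℝ => s * Real.exp (l*(3*s+0)))
        (1 * Real.exp (l*(3*s+0)) + s*(l*3*Real.exp (l*(3*s+0)))) s :=
      (hasDerivAt_id s).mul h30
    have hlin : HasDerivAt (fun s : ℝ => Real.exp (l*(3*y)) * s) (Real.exp (l*(3*y))) s := by
      simpa using (hasDerivAt_id s).const_mul (Real.exp (l*(3*y)))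
    have H := (((((h30.div_const (3*l)).sub (h20.div_const (2*l))).div_const l).sub
      (((hmul.div_const (3*l)).sub (h30.div_const (9*l^2))).const_mul (1/3))).add
      (((h12.div_const l).sub (h30.div_const (3*l))).div_const (2*l))).sub
      ((hlin.sub (h30.div_const (3*l))).div_const (9*l))
    convert H using 1
    · rfl
    field_simp
    ring
  · apply Continuous.intervalIntegrable
    fun_prop

private noncomputable def F2 (l y s : ℝ) : ℝ :=
  (Real.exp (l*(2*s+y))/(2*l) - Real.exp (l*(2*s+0))/(2*l))/l
  - (1/3)*(y*(Real.exp (l*(3*s+0))/(3*l)))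

private lemma int_G2 (l y a b : ℝ) (hl : l ≠ 0) :
    ∫ s in a..b, ((Real.exp (l*(2*s+y)) - Real.exp (l*(2*s+0)))/l
      - (1/3)*(y * Real.exp (l*(3*s+0))))
    = F2 l y b - F2 l y a := by
  apply intervalIntegral.integral_eq_sub_of_hasDerivAt (f := F2 l y)
  · intro s _
    unfold F2
    have h2y := hd_lin l 2 y s
    have h20 := hd_lin l 2 0 s
    have h30 := hd_lin l 3 0 s
    have H := (((h2y.div_const (2*l)).sub (h20.div_const (2*l))).div_const l).sub
      (((h30.div_const (3*l)).const_mul y).const_mul (1/3))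
    convert H using 1
    · rfl
    field_simp
  · apply Continuous.intervalIntegrable
    fun_prop

private noncomputable def F3 (l s : ℝ) : ℝ :=
  (11/(18*l))*(Real.exp (l*(3*s+0))/(3*l)) - Real.exp (l*(2*s+0))/(2*l)/l
  - (1/3)*(s * Real.exp (l*(3*s+0))/(3*l) - Real.exp (l*(3*s+0))/(9*l^2))

private lemma int_G3 (l a b : ℝ) (hl : l ≠ 0) :
    ∫ s in a..b, ((11/(18*l)) * Real.exp (l*(3*s+0)) - Real.exp (l*(2*s+0))/l
      - (1/3)*(s * Real.exp (l*(3*s+0))))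
    = F3 l b - F3 l a := by
  apply intervalIntegral.integral_eq_sub_of_hasDerivAt (f := F3 l)
  · intro s _
    unfold F3
    have h30 := hd_lin l 3 0 s
    have h20 := hd_lin l 2 0 s
    have hmul : HasDerivAt (fun s : ℝ => s * Real.exp (l*(3*s+0)))
        (1 * Real.exp (l*(3*s+0)) + s*(l*3*Real.exp (l*(3*s+0)))) s :=
      (hasDerivAt_id s).mul h30
    have H := ((((h30.div_const (3*l)).const_mul (11/(18*l))).sub
      ((h20.div_const (2*l)).div_const l)).sub
      (((hmul.div_const (3*l)).sub (h30.div_const (9*l^2))).const_mul (1/3)))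
    convert H using 1
    · rfl
    field_simp
    ring
  · apply Continuous.intervalIntegrable
    fun_prop

private lemma cont_formula (l y : ℝ) :
    Continuous (fun s : ℝ => (Real.exp (l*(2*s + min s y)) - Real.exp (l*(2*s)))/l
      - (1/3)*Real.exp (l*(3*s))*(min s y)
      + (Real.exp (l*(s+2*y)) - Real.exp (l*(s+2*min s y)))/(2*l)
      - (Real.exp (l*(3*y)) - Real.exp (l*(3*min s y)))/(9*l)) := by
  have hmin : Continuous fun s : ℝ => min s y := continuous_id.min continuous_const
  fun_prop

set_option maxHeartbeats 2000000 in
/-- Double integrals of the stable-spline kernel: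
(i) `∫_0^x ∫_0^y (α^(max(s,t)+s+t) − (1/3)α^(3 max(s,t))) dt ds
      = (α^(min(x,y)) − 1)(α^(2x) + α^(2y))/(2(ln α)²)
        − min(x,y)(α^(3x) + α^(3y))/(9 ln α) + (7 − 7α^(3 min(x,y)))/(27(ln α)²)`;
(ii) `∫_0^x ∫_{ℝ≥0} (α^(max(s,t)+s+t) − (1/3)α^(3 max(s,t))) dt ds
      = (14 − 27α^(2x) + 13α^(3x))/(54(ln α)²) − x·α^(3x)/(9 ln α)`. -/
theorem nu_SS
    (α : ℝ) (hα : α ∈ Set.Ioo (0 : ℝ) 1)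
    (x y : ℝ) (hx : 0 ≤ x) (hy : 0 ≤ y) :
    (∫ s in (0:ℝ)..x, ∫ t in (0:ℝ)..y,
        (α ^ (max s t + s + t) - (1/3) * α ^ (3 * max s t)) =
      (α ^ min x y - 1) * (α ^ (2 * x) + α ^ (2 * y)) / (2 * (Real.log α) ^ 2) -
        min x y * (α ^ (3 * x) + α ^ (3 * y)) / (9 * Real.log α) +
        (7 - 7 * α ^ (3 * min x y)) / (27 * (Real.log α) ^ 2)) ∧
    (∫ s in (0:ℝ)..x, ∫ t in Set.Ici (0 : ℝ),
        (α ^ (max s t + s + t) - (1/3) * α ^ (3 * max s t)) =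
      (14 - 27 * α ^ (2 * x) + 13 * α ^ (3 * x)) / (54 * (Real.log α) ^ 2) -
        x * α ^ (3 * x) / (9 * Real.log α)) := by
  obtain ⟨hα0, hα1⟩ := hα
  set l := Real.log α with hldef
  have hl : l < 0 := Real.log_neg hα0 hα1
  have hl' : l ≠ 0 := hl.ne
  have hrw : ∀ e : ℝ, α ^ e = Real.exp (l * e) := fun e => by
    rw [Real.rpow_def_of_pos hα0]
  constructor
  · simp only [hrw]
    have step1 : (∫ s in (0:ℝ)..x, ∫ t in (0:ℝ)..y,
          (Real.exp (l * (max s t + s + t)) - 1/3 * Real.exp (l * (3 * max s t))))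
        = ∫ s in (0:ℝ)..x,
          ((Real.exp (l*(2*s + min s y)) - Real.exp (l*(2*s)))/l
            - (1/3)*Real.exp (l*(3*s))*(min s y)
            + (Real.exp (l*(s+2*y)) - Real.exp (l*(s+2*min s y)))/(2*l)
            - (Real.exp (l*(3*y)) - Real.exp (l*(3*min s y)))/(9*l)) := by
      apply intervalIntegral.integral_congr
      intro s hs'
      rw [Set.uIcc_of_le hx] at hs'
      exact inner_fin l s y hl' hs'.1 hy
    rw [step1]
    rcases le_total x y with hxy | hxy
    · rw [min_eq_left hxy]
      have e : (∫ s in (0:ℝ)..x,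
          ((Real.exp (l*(2*s + min s y)) - Real.exp (l*(2*s)))/l
            - (1/3)*Real.exp (l*(3*s))*(min s y)
            + (Real.exp (l*(s+2*y)) - Real.exp (l*(s+2*min s y)))/(2*l)
            - (Real.exp (l*(3*y)) - Real.exp (l*(3*min s y)))/(9*l)))
          = ∫ s in (0:ℝ)..x, ((Real.exp (l*(3*s+0)) - Real.exp (l*(2*s+0)))/l
            - (1/3)*(s * Real.exp (l*(3*s+0)))
            + (Real.exp (l*(1*s+2*y)) - Real.exp (l*(3*s+0)))/(2*l)
            - (Real.exp (l*(3*y)) - Real.exp (l*(3*s+0)))/(9*l)) := by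
        apply intervalIntegral.integral_congr
        intro s hs'
        rw [Set.uIcc_of_le hx] at hs'
        have hm : min s y = s := min_eq_left (le_trans hs'.2 hxy)
        simp only [hm]
        ring_nf
      rw [e, int_G1 l y 0 x hl']
      unfold F1
      rw [show l*(3*x+0) = l*x+(l*x+l*x) by ring, show l*(2*x+0) = l*x+l*x by ring,
        show l*(1*x+2*y) = l*x+(l*y+l*y) by ring, show l*(3*y) = l*y+(l*y+l*y) by ring,
        show l*(3*0+0) = (0:ℝ) by ring, show l*(2*0+0) = (0:ℝ) by ring,
        show l*(1*0+2*y) = l*y+l*y by ring, show l*(2*x) = l*x+l*x by ring,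
        show l*(2*y) = l*y+l*y by ring, show l*(3*x) = l*x+(l*x+l*x) by ring]
      simp only [Real.exp_add, Real.exp_zero]
      field_simp
      ring
    · rw [min_eq_right hxy]
      rw [← intervalIntegral.integral_add_adjacent_intervals (a := (0:ℝ)) (b := y) (c := x)
        ((cont_formula l y).intervalIntegrable 0 y) ((cont_formula l y).intervalIntegrable y x)]
      have e1 : (∫ s in (0:ℝ)..y,
          ((Real.exp (l*(2*s + min s y)) - Real.exp (l*(2*s)))/l
            - (1/3)*Real.exp (l*(3*s))*(min s y)
            + (Real.exp (l*(s+2*y)) - Real.exp (l*(s+2*min s y)))/(2*l)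
            - (Real.exp (l*(3*y)) - Real.exp (l*(3*min s y)))/(9*l)))
          = ∫ s in (0:ℝ)..y, ((Real.exp (l*(3*s+0)) - Real.exp (l*(2*s+0)))/l
            - (1/3)*(s * Real.exp (l*(3*s+0)))
            + (Real.exp (l*(1*s+2*y)) - Real.exp (l*(3*s+0)))/(2*l)
            - (Real.exp (l*(3*y)) - Real.exp (l*(3*s+0)))/(9*l)) := by
        apply intervalIntegral.integral_congr
        intro s hs'
        rw [Set.uIcc_of_le hy] at hs'
        have hm : min s y = s := min_eq_left hs'.2
        simp only [hm]
        ring_nf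
      have e2 : (∫ s in y..x,
          ((Real.exp (l*(2*s + min s y)) - Real.exp (l*(2*s)))/l
            - (1/3)*Real.exp (l*(3*s))*(min s y)
            + (Real.exp (l*(s+2*y)) - Real.exp (l*(s+2*min s y)))/(2*l)
            - (Real.exp (l*(3*y)) - Real.exp (l*(3*min s y)))/(9*l)))
          = ∫ s in y..x, ((Real.exp (l*(2*s+y)) - Real.exp (l*(2*s+0)))/l
            - (1/3)*(y * Real.exp (l*(3*s+0)))) := by
        apply intervalIntegral.integral_congr
        intro s hs'
        rw [Set.uIcc_of_le hxy] at hs'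
        have hm : min s y = y := min_eq_right hs'.1
        simp only [hm]
        ring_nf
      rw [e1, e2, int_G1 l y 0 y hl', int_G2 l y y x hl']
      unfold F1 F2
      rw [show l*(3*y+0) = l*y+(l*y+l*y) by ring, show l*(2*y+0) = l*y+l*y by ring,
        show l*(1*y+2*y) = l*y+(l*y+l*y) by ring, show l*(3*y) = l*y+(l*y+l*y) by ring,
        show l*(3*0+0) = (0:ℝ) by ring, show l*(2*0+0) = (0:ℝ) by ring,
        show l*(1*0+2*y) = l*y+l*y by ring,
        show l*(2*x+y) = l*x+(l*x+l*y) by ring, show l*(2*x+0) = l*x+l*x by ring,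
        show l*(3*x+0) = l*x+(l*x+l*x) by ring, show l*(2*y+y) = l*y+(l*y+l*y) by ring,
        show l*(2*x) = l*x+l*x by ring, show l*(2*y) = l*y+l*y by ring,
        show l*(3*x) = l*x+(l*x+l*x) by ring]
      simp only [Real.exp_add, Real.exp_zero]
      field_simp
      ring
  · simp only [hrw]
    have step1 : (∫ s in (0:ℝ)..x, ∫ t in Set.Ici (0:ℝ),
          (Real.exp (l * (max s t + s + t)) - 1/3 * Real.exp (l * (3 * max s t))))
        = ∫ s in (0:ℝ)..x, ((11/(18*l)) * Real.exp (l*(3*s+0))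
            - Real.exp (l*(2*s+0))/l - (1/3)*(s * Real.exp (l*(3*s+0)))) := by
      apply intervalIntegral.integral_congr
      intro s hs'
      rw [Set.uIcc_of_le hx] at hs'
      simp only [inner_inf l s hl hs'.1]
      ring_nf
    rw [step1, int_G3 l 0 x hl']
    unfold F3
    rw [show l*(3*x+0) = l*x+(l*x+l*x) by ring, show l*(2*x+0) = l*x+l*x by ring,
      show l*(3*0+0) = (0:ℝ) by ring, show l*(2*0+0) = (0:ℝ) by ring,
      show l*(2*x) = l*x+l*x by ring, show l*(3*x) = l*x+(l*x+l*x) by ring]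
    simp only [Real.exp_add, Real.exp_zero]
    field_simp
    ring
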